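/- Let n ≥ 1, X = ℝⁿ/ℤⁿ, β ≠ 0 a real number, μ₀ a Borel probability measure on X, and for φ ∈ C(X) set F(φ) = ∫_X φ^c dx + (1/β) log ∫_X e^{βφ} dμ₀. Then F((φ^c)^c) ≤ F(φ) for every φ ∈ C(X). Moreover, if μ₀ has full support, then equality holds if and only if (φ^c)^c = φ, i.e. φ ∈ P(X). -/

import Mathlib

open MeasureTheory Filter Topology Real
open scoped ENNReal NNReal

noncomputable section

instance fact_zero_lt_one' : Fact ((0:ℝ) < 1) := ⟨one_pos⟩

/-- The `n`-dimensional torus `ℝⁿ/ℤⁿ`. -/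
abbrev Torus (n : ℕ) : Type := Fin n → AddCircle (1 : ℝ)

/-- Section of the quotient map, with values in `[0,1)ⁿ`. -/
def torusSec {n : ℕ} (x : Torus n) : Fin n → ℝ := fun i => (AddCircle.equivIco 1 0 (x i) : ℝ)

/-- Squared Euclidean norm on `ℝⁿ`. -/
def sqnorm {n : ℕ} (v : Fin n → ℝ) : ℝ := ∑ i, (v i)^2

/-- A lattice point of `ℤⁿ` viewed in `ℝⁿ`. -/
def zvec {n : ℕ} (m : Fin n → ℤ) : Fin n → ℝ := fun i => (m i : ℝ)

/-- The quotient metric `d(πx, πy) = inf_{m ∈ ℤⁿ} |x - y - m|` on the torus. -/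
def tdist {n : ℕ} (x y : Torus n) : ℝ :=
  ⨅ m : Fin n → ℤ, Real.sqrt (sqnorm (torusSec x - torusSec y - zvec m))

/-- The `c`-transform `φ^c(y) = sup_x (-d(x,y)²/2 - φ(x))` on the torus. -/
def ctrans {n : ℕ} (φ : Torus n → ℝ) (y : Torus n) : ℝ :=
  ⨆ x : Torus n, (-(tdist x y ^ 2) / 2 - φ x)

/-- The free energy functional `F(φ) = ∫_X φ^c dx + (1/β) log ∫_X e^{βφ} dμ₀`. -/
def freeEnergy {n : ℕ} (β : ℝ) (μ₀ : Measure (Torus n)) (φ : Torus n → ℝ) : ℝ :=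
  (∫ y, ctrans φ y ∂(volume : Measure (Torus n))) +
    (1 / β) * Real.log (∫ x, Real.exp (β * φ x) ∂μ₀)

namespace S18

variable {n : ℕ}

lemma sqrt_sqnorm (v : Fin n → ℝ) :
    Real.sqrt (sqnorm v) = ‖(WithLp.equiv 2 (Fin n → ℝ)).symm v‖ := by
  rw [EuclideanSpace.norm_eq]; congr 1; simp [sqnorm, sq_abs]

lemma sqnorm_neg (v : Fin n → ℝ) : sqnorm (-v) = sqnorm v := by
  simp [sqnorm]

lemma tdist_bddBelow (x y : Torus n) :
    BddBelow (Set.range fun m : Fin n → ℤ =>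
      Real.sqrt (sqnorm (torusSec x - torusSec y - zvec m))) :=
  ⟨0, by rintro r ⟨m, rfl⟩; exact Real.sqrt_nonneg _⟩

lemma tdist_nonneg (x y : Torus n) : 0 ≤ tdist x y :=
  Real.iInf_nonneg fun _ => Real.sqrt_nonneg _

lemma tdist_le (x y : Torus n) (m : Fin n → ℤ) :
    tdist x y ≤ Real.sqrt (sqnorm (torusSec x - torusSec y - zvec m)) :=
  ciInf_le (tdist_bddBelow x y) m

lemma tdist_self (x : Torus n) : tdist x x = 0 := by
  refine le_antisymm ?_ (tdist_nonneg x x)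
  have := tdist_le x x 0
  simpa [zvec, sqnorm] using this

lemma tdist_symm (x y : Torus n) : tdist x y = tdist y x := by
  have key : ∀ a b : Torus n, tdist a b ≤ tdist b a := by
    intro a b
    refine le_ciInf fun m => ?_
    have h : torusSec b - torusSec a - zvec m = -(torusSec a - torusSec b - zvec (-m)) := by
      funext i; simp [zvec]; ring
    calc tdist a b ≤ Real.sqrt (sqnorm (torusSec a - torusSec b - zvec (-m))) :=
          tdist_le a b (-m)
      _ = Real.sqrt (sqnorm (torusSec b - torusSec a - zvec m)) := by rw [h, sqnorm_neg]
  exact le_antisymm (key x y) (key y x)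

lemma tdist_triangle (x y z : Torus n) : tdist x z ≤ tdist x y + tdist y z := by
  show tdist x z ≤ (⨅ m : Fin n → ℤ, Real.sqrt (sqnorm (torusSec x - torusSec y - zvec m)))
      + ⨅ m : Fin n → ℤ, Real.sqrt (sqnorm (torusSec y - torusSec z - zvec m))
  refine le_ciInf_add_ciInf fun m₁ m₂ => ?_
  have h : torusSec x - torusSec z - zvec (m₁ + m₂)
      = (torusSec x - torusSec y - zvec m₁) + (torusSec y - torusSec z - zvec m₂) := by
    funext i; simp [zvec]; ring
  calc tdist x z ≤ Real.sqrt (sqnorm (torusSec x - torusSec z - zvec (m₁ + m₂))) :=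
        tdist_le x z (m₁ + m₂)
    _ ≤ _ := by
        rw [h, sqrt_sqnorm, sqrt_sqnorm, sqrt_sqnorm]
        exact norm_add_le _ _

lemma torusSec_mem (x : Torus n) (i : Fin n) : torusSec x i ∈ Set.Ico (0:ℝ) 1 := by
  have := (AddCircle.equivIco 1 0 (x i)).2
  simpa [torusSec] using this

lemma tdist_le_sqrt (x y : Torus n) : tdist x y ≤ Real.sqrt n := by
  refine le_trans (tdist_le x y 0) (Real.sqrt_le_sqrt ?_)
  have key : ∀ i, (torusSec x i - torusSec y i - (0:ℝ))^2 ≤ 1 := by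
    intro i
    obtain ⟨hx0, hx1⟩ := torusSec_mem x i
    obtain ⟨hy0, hy1⟩ := torusSec_mem y i
    nlinarith
  calc sqnorm (torusSec x - torusSec y - zvec 0)
      = ∑ i, (torusSec x i - torusSec y i - 0)^2 := by simp [sqnorm, zvec]
    _ ≤ ∑ _i : Fin n, (1:ℝ) := Finset.sum_le_sum fun i _ => key i
    _ = n := by simp

lemma tdist_le_dist (x y : Torus n) : tdist x y ≤ Real.sqrt n * dist x y := by
  set m : Fin n → ℤ := fun i => round (torusSec x i - torusSec y i) with hm
  have hcoord : ∀ i, |torusSec x i - torusSec y i - (m i : ℝ)| = dist (x i) (y i) := by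
    intro i
    have h1 : ((torusSec x i - torusSec y i : ℝ) : AddCircle (1:ℝ)) = x i - y i := by
      rw [AddCircle.coe_sub]
      congr 1 <;> exact (AddCircle.equivIco 1 0).symm_apply_apply _
    have h2 : dist (x i) (y i) = ‖x i - y i‖ := dist_eq_norm _ _
    rw [h2, ← h1, AddCircle.norm_eq]
    simp [hm]
  refine le_trans (tdist_le x y m) ?_
  have hsq : sqnorm (torusSec x - torusSec y - zvec m) ≤ n * dist x y ^ 2 := by
    have key : ∀ i, (torusSec x i - torusSec y i - (m i:ℝ))^2 ≤ dist x y ^ 2 := by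
      intro i
      have h3 : dist (x i) (y i) ≤ dist x y := dist_le_pi_dist x y i
      have h4 := hcoord i
      nlinarith [abs_nonneg (torusSec x i - torusSec y i - (m i:ℝ)),
        sq_abs (torusSec x i - torusSec y i - (m i:ℝ)), dist_nonneg (x := x i) (y := y i)]
    calc sqnorm (torusSec x - torusSec y - zvec m)
        = ∑ i, (torusSec x i - torusSec y i - (m i:ℝ))^2 := by simp [sqnorm, zvec]
      _ ≤ ∑ _i : Fin n, dist x y ^2 := Finset.sum_le_sum fun i _ => key i
      _ = n * dist x y ^2 := by simp [mul_comm]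
  calc Real.sqrt (sqnorm (torusSec x - torusSec y - zvec m))
      ≤ Real.sqrt (n * dist x y ^2) := Real.sqrt_le_sqrt hsq
    _ = Real.sqrt n * dist x y := by
        rw [Real.sqrt_mul (by positivity), Real.sqrt_sq dist_nonneg]

lemma ctrans_bddAbove {φ : Torus n → ℝ} {M : ℝ} (hM : ∀ x, |φ x| ≤ M) (y : Torus n) :
    BddAbove (Set.range fun x : Torus n => -(tdist x y ^ 2) / 2 - φ x) := by
  refine ⟨M, ?_⟩
  rintro r ⟨x, rfl⟩
  have h1 : -(tdist x y ^ 2) / 2 ≤ 0 := by nlinarith [sq_nonneg (tdist x y)]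
  have h2 : -φ x ≤ M := (neg_le_abs (φ x)).trans (hM x)
  linarith

lemma le_ctrans {φ : Torus n → ℝ} {M : ℝ} (hM : ∀ x, |φ x| ≤ M) (x y : Torus n) :
    -(tdist x y ^ 2) / 2 - φ x ≤ ctrans φ y :=
  le_ciSup (ctrans_bddAbove hM y) x

lemma ctrans_le {φ : Torus n → ℝ} {r : ℝ} {y : Torus n}
    (h : ∀ x, -(tdist x y ^ 2) / 2 - φ x ≤ r) : ctrans φ y ≤ r :=
  ciSup_le h

lemma ctrans_bound {φ : Torus n → ℝ} {M : ℝ} (hM : ∀ x, |φ x| ≤ M) (y : Torus n) :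
    |ctrans φ y| ≤ M := by
  rw [abs_le]
  constructor
  · have h1 := le_ctrans hM y y
    rw [tdist_self] at h1
    have h2 : -M ≤ -φ y := neg_le_neg ((le_abs_self (φ y)).trans (hM y))
    simpa using le_trans (by linarith) h1
  · refine ctrans_le fun x => ?_
    have h1 : -(tdist x y ^ 2) / 2 ≤ 0 := by nlinarith [sq_nonneg (tdist x y)]
    have h2 : -φ x ≤ M := (neg_le_abs (φ x)).trans (hM x)
    linarith

lemma ctrans_mono {φ ψ : Torus n → ℝ} {M : ℝ} (hM : ∀ x, |φ x| ≤ M)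
    (h : ∀ x, φ x ≤ ψ x) (y : Torus n) : ctrans ψ y ≤ ctrans φ y :=
  ctrans_le fun x => le_trans (by have := h x; linarith) (le_ctrans hM x y)

lemma ctrans_ctrans_le {φ : Torus n → ℝ} {M : ℝ} (hM : ∀ x, |φ x| ≤ M) (x : Torus n) :
    ctrans (ctrans φ) x ≤ φ x := by
  refine ctrans_le fun y => ?_
  have h1 : -(tdist x y ^ 2) / 2 - φ x ≤ ctrans φ y := le_ctrans hM x y
  have h2 : tdist x y = tdist y x := tdist_symm x y
  linarith [h2 ▸ h1]

lemma ctrans_ctrans_ctrans {φ : Torus n → ℝ} {M : ℝ} (hM : ∀ x, |φ x| ≤ M) :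
    ctrans (ctrans (ctrans φ)) = ctrans φ := by
  funext y
  refine le_antisymm (ctrans_ctrans_le (fun x => ctrans_bound hM x) y) ?_
  exact ctrans_mono (fun x => ctrans_bound (fun z => ctrans_bound hM z) x)
    (ctrans_ctrans_le hM) y

lemma ctrans_lip {φ : Torus n → ℝ} {M : ℝ} (hM : ∀ x, |φ x| ≤ M) (y z : Torus n) :
    ctrans φ y ≤ ctrans φ z + Real.sqrt n * tdist y z := by
  refine ctrans_le fun x => ?_
  have key : -(tdist x y ^ 2) / 2 ≤ -(tdist x z ^ 2) / 2 + Real.sqrt n * tdist y z := by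
    have h1 : tdist x z ≤ tdist x y + tdist y z := tdist_triangle x y z
    have h2 : 0 ≤ tdist x y := tdist_nonneg x y
    have h3 : 0 ≤ tdist y z := tdist_nonneg y z
    have h4 : tdist x y ≤ Real.sqrt n := tdist_le_sqrt x y
    have h5 : tdist x z ≤ Real.sqrt n := tdist_le_sqrt x z
    have h6 : 0 ≤ tdist x z := tdist_nonneg x z
    nlinarith [mul_le_mul_of_nonneg_left (show tdist x z - tdist x y ≤ tdist y z by linarith)
      (by linarith : (0:ℝ) ≤ tdist x y + tdist x z),
      mul_le_mul_of_nonneg_left (show tdist x y + tdist x z ≤ 2 * Real.sqrt n by linarith) h3]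
  calc -(tdist x y ^ 2) / 2 - φ x
      ≤ (-(tdist x z ^ 2) / 2 - φ x) + Real.sqrt n * tdist y z := by linarith
    _ ≤ _ := by linarith [le_ctrans hM x z]

lemma ctrans_continuous {φ : Torus n → ℝ} {M : ℝ} (hM : ∀ x, |φ x| ≤ M) :
    Continuous (ctrans φ) := by
  rw [Metric.continuous_iff]
  intro y ε hε
  refine ⟨ε / (n + 1), by positivity, fun z hz => ?_⟩
  have habs : |ctrans φ z - ctrans φ y| ≤ (n : ℝ) * dist z y := by
    have key : ∀ a b : Torus n, ctrans φ a - ctrans φ b ≤ (n : ℝ) * dist a b := by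
      intro a b
      have h1 := ctrans_lip hM a b
      have h2 : tdist a b ≤ Real.sqrt n * dist a b := tdist_le_dist a b
      have h3 : (0:ℝ) ≤ Real.sqrt n := Real.sqrt_nonneg _
      have h4 : Real.sqrt n * tdist a b ≤ Real.sqrt n * (Real.sqrt n * dist a b) :=
        mul_le_mul_of_nonneg_left h2 h3
      have h5 : Real.sqrt n * Real.sqrt n = (n : ℝ) :=
        Real.mul_self_sqrt (Nat.cast_nonneg n)
      have h6 : Real.sqrt n * (Real.sqrt n * dist a b) = (n:ℝ) * dist a b := by
        rw [← mul_assoc, h5]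
      linarith
    rw [abs_sub_le_iff]
    refine ⟨key z y, ?_⟩
    have := key y z
    rwa [dist_comm] at this
  rw [Real.dist_eq]
  have hd : dist z y < ε / (n + 1) := hz
  have hd0 : (0:ℝ) ≤ dist z y := dist_nonneg
  have hfin : (n:ℝ) * dist z y < ε := by
    have hn1 : (0:ℝ) < (n:ℝ) + 1 := by positivity
    calc (n:ℝ) * dist z y ≤ ((n:ℝ)+1) * dist z y := by nlinarith
      _ < ((n:ℝ)+1) * (ε / (n+1)) := mul_lt_mul_of_pos_left hd hn1
      _ = ε := by field_simp
  linarith [habs]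

lemma exists_bound {φ : Torus n → ℝ} (hφ : Continuous φ) : ∃ M, ∀ x, |φ x| ≤ M := by
  obtain ⟨C, hC⟩ := isCompact_univ.exists_bound_of_continuousOn hφ.continuousOn
  exact ⟨C, fun x => hC x (Set.mem_univ x)⟩

lemma integrable_cont {φ : Torus n → ℝ} (hφ : Continuous φ) (μ : Measure (Torus n))
    [IsFiniteMeasure μ] : Integrable φ μ := by
  obtain ⟨M, hM⟩ := exists_bound hφ
  exact ⟨hφ.aestronglyMeasurable,
    HasFiniteIntegral.of_bounded (C := M) (Filter.Eventually.of_forall fun x => hM x)⟩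

lemma integral_exp_pos {φ : Torus n → ℝ} (hφ : Continuous φ) (μ : Measure (Torus n))
    [IsProbabilityMeasure μ] (β : ℝ) : 0 < ∫ x, Real.exp (β * φ x) ∂μ := by
  obtain ⟨M, hM⟩ := exists_bound hφ
  have hle : ∀ x, Real.exp (-(|β| * M)) ≤ Real.exp (β * φ x) := by
    intro x
    apply Real.exp_le_exp.mpr
    have h1 : |β * φ x| ≤ |β| * M := by
      rw [abs_mul]
      have := hM x
      have h0 : (0:ℝ) ≤ |β| := abs_nonneg β
      nlinarith [abs_nonneg (φ x)]
    linarith [neg_abs_le (β * φ x)]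
  have hint : Integrable (fun x => Real.exp (β * φ x)) μ :=
    integrable_cont (Real.continuous_exp.comp (continuous_const.mul hφ)) μ
  calc (0:ℝ) < Real.exp (-(|β| * M)) := Real.exp_pos _
    _ = ∫ _x, Real.exp (-(|β| * M)) ∂μ := by simp
    _ ≤ ∫ x, Real.exp (β * φ x) ∂μ := integral_mono (integrable_const _) hint hle

lemma eq_of_integral_eq (μ : Measure (Torus n)) [IsProbabilityMeasure μ]
    (hfull : ∀ U : Set (Torus n), IsOpen U → U.Nonempty → 0 < μ U)
    {f g : Torus n → ℝ} (hf : Continuous f) (hg : Continuous g)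
    (hle : ∀ x, f x ≤ g x) (hint : ∫ x, f x ∂μ = ∫ x, g x ∂μ) : f = g := by
  have hif : Integrable f μ := integrable_cont hf μ
  have hig : Integrable g μ := integrable_cont hg μ
  have hz : ∫ x, (g x - f x) ∂μ = 0 := by
    rw [integral_sub hig hif]; linarith
  have hae : (fun x => g x - f x) =ᵐ[μ] 0 :=
    (integral_eq_zero_iff_of_nonneg (fun x => by simp [hle x]) (hig.sub hif)).mp hz
  by_contra hne
  have hex : ∃ x, f x ≠ g x := by
    by_contra h
    push_neg at h
    exact hne (funext h)
  obtain ⟨x₀, hx₀⟩ := hex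
  have hpos : 0 < g x₀ - f x₀ := sub_pos.mpr (lt_of_le_of_ne (hle x₀) hx₀)
  set U : Set (Torus n) := (fun x => g x - f x) ⁻¹' Set.Ioi 0 with hU
  have hUopen : IsOpen U := (hg.sub hf).isOpen_preimage _ isOpen_Ioi
  have hUne : U.Nonempty := ⟨x₀, hpos⟩
  have h1 : 0 < μ U := hfull U hUopen hUne
  have h2 : μ U = 0 := by
    have h3 := ae_iff.mp hae
    refine measure_mono_null ?_ h3
    intro x hx
    simp only [hU, Set.mem_preimage, Set.mem_Ioi] at hx
    simp only [Set.mem_setOf_eq, Pi.zero_apply]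
    intro h
    linarith
  exact absurd h2 (ne_of_gt h1)

end S18

/-- The projection `φ ↦ (φ^c)^c` does not increase the free energy:
`F((φ^c)^c) ≤ F(φ)`; and if `μ₀` has full support, equality holds iff `(φ^c)^c = φ`. -/
theorem statement18 (n : ℕ) (hn : 1 ≤ n) (β : ℝ) (hβ : β ≠ 0)
    (μ₀ : Measure (Torus n)) [IsProbabilityMeasure μ₀]
    (φ : Torus n → ℝ) (hφ : Continuous φ) :
    freeEnergy β μ₀ (ctrans (ctrans φ)) ≤ freeEnergy β μ₀ φ ∧
      ((∀ U : Set (Torus n), IsOpen U → U.Nonempty → 0 < μ₀ U) →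
        (freeEnergy β μ₀ (ctrans (ctrans φ)) = freeEnergy β μ₀ φ ↔
          ctrans (ctrans φ) = φ)) := by
  obtain ⟨M, hM⟩ := S18.exists_bound hφ
  have hMc : ∀ x, |ctrans φ x| ≤ M := fun x => S18.ctrans_bound hM x
  set ψ := ctrans (ctrans φ) with hψdef
  have hψcont : Continuous ψ := S18.ctrans_continuous hMc
  have hle : ∀ x, ψ x ≤ φ x := S18.ctrans_ctrans_le hM
  have hccc : ctrans ψ = ctrans φ := S18.ctrans_ctrans_ctrans hM
  set Iψ := ∫ x, Real.exp (β * ψ x) ∂μ₀ with hIψdef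
  set Iφ := ∫ x, Real.exp (β * φ x) ∂μ₀ with hIφdef
  have hψexp : Continuous fun x => Real.exp (β * ψ x) :=
    Real.continuous_exp.comp (continuous_const.mul hψcont)
  have hφexp : Continuous fun x => Real.exp (β * φ x) :=
    Real.continuous_exp.comp (continuous_const.mul hφ)
  have hIψpos : 0 < Iψ := S18.integral_exp_pos hψcont μ₀ β
  have hIφpos : 0 < Iφ := S18.integral_exp_pos hφ μ₀ β
  have hFψ : freeEnergy β μ₀ ψ
      = (∫ y, ctrans φ y ∂(volume : Measure (Torus n))) + (1 / β) * Real.log Iψ := by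
    rw [freeEnergy, hccc]
  have hFφ : freeEnergy β μ₀ φ
      = (∫ y, ctrans φ y ∂(volume : Measure (Torus n))) + (1 / β) * Real.log Iφ := rfl
  have hkey : (1 / β) * Real.log Iψ ≤ (1 / β) * Real.log Iφ := by
    rcases lt_or_gt_of_ne hβ with hneg | hpos
    · have hmono : ∀ x, Real.exp (β * φ x) ≤ Real.exp (β * ψ x) := fun x =>
        Real.exp_le_exp.mpr (mul_le_mul_of_nonpos_left (hle x) hneg.le)
      have hI : Iφ ≤ Iψ :=
        integral_mono (S18.integrable_cont hφexp μ₀) (S18.integrable_cont hψexp μ₀) hmono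
      have hlog : Real.log Iφ ≤ Real.log Iψ := Real.log_le_log hIφpos hI
      have hb : (1:ℝ) / β ≤ 0 := by
        apply div_nonpos_of_nonneg_of_nonpos <;> linarith
      exact mul_le_mul_of_nonpos_left hlog hb
    · have hmono : ∀ x, Real.exp (β * ψ x) ≤ Real.exp (β * φ x) := fun x =>
        Real.exp_le_exp.mpr (mul_le_mul_of_nonneg_left (hle x) hpos.le)
      have hI : Iψ ≤ Iφ :=
        integral_mono (S18.integrable_cont hψexp μ₀) (S18.integrable_cont hφexp μ₀) hmono
      have hlog : Real.log Iψ ≤ Real.log Iφ := Real.log_le_log hIψpos hI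
      have hb : (0:ℝ) ≤ 1 / β := by positivity
      exact mul_le_mul_of_nonneg_left hlog hb
  constructor
  · rw [hFψ, hFφ]
    linarith
  · intro hfull
    constructor
    · intro heq
      rw [hFψ, hFφ] at heq
      have h1 : (1 / β) * Real.log Iψ = (1 / β) * Real.log Iφ := by linarith
      have h2 : Real.log Iψ = Real.log Iφ :=
        mul_left_cancel₀ (one_div_ne_zero hβ) h1
      have h3 : Iψ = Iφ := by
        rw [← Real.exp_log hIψpos, ← Real.exp_log hIφpos, h2]
      rcases lt_or_gt_of_ne hβ with hneg | hpos
      · have hmono : ∀ x, Real.exp (β * φ x) ≤ Real.exp (β * ψ x) := fun x =>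
          Real.exp_le_exp.mpr (mul_le_mul_of_nonpos_left (hle x) hneg.le)
        have hfg := S18.eq_of_integral_eq μ₀ hfull hφexp hψexp hmono h3.symm
        funext x
        have hx := congrFun hfg x
        have := Real.exp_eq_exp.mp hx.symm
        exact mul_left_cancel₀ hβ this
      · have hmono : ∀ x, Real.exp (β * ψ x) ≤ Real.exp (β * φ x) := fun x =>
          Real.exp_le_exp.mpr (mul_le_mul_of_nonneg_left (hle x) hpos.le)
        have hfg := S18.eq_of_integral_eq μ₀ hfull hψexp hφexp hmono h3
        funext x
        have hx := congrFun hfg x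
        have := Real.exp_eq_exp.mp hx
        exact mul_left_cancel₀ hβ this
    · intro h
      rw [h]
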